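/- Let l be a prime, G a group, and G' an abelian normal subgroup of G of index l. Then for every g ∈ G with g ∉ G' and every c in the commutator subgroup ⁅G, G⁆ of G, one has (g·c)^l = g^l. -/

import Mathlib

open scoped IsMulCommutative commutatorElement

/-- If `G'` is an abelian normal subgroup of prime index `l` in `G`, then for every
`g ∈ G` with `g ∉ G'` and every `c` in the commutator subgroup `⁅G, G⁆`,
one has `(g c)^l = g^l`. -/
theorem stmt8 (l : ℕ) (hl : l.Prime) (G : Type*) [Group G]
    (G' : Subgroup G) [G'.Normal] [IsMulCommutative G'] (hidx : G'.index = l)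
    (g : G) (hg : g ∉ G') (c : G) (hc : c ∈ commutator G) :
    (g * c) ^ l = g ^ l := by
  classical
  haveI : Fact l.Prime := ⟨hl⟩
  haveI : G'.FiniteIndex := ⟨hidx ▸ hl.ne_zero⟩
  haveI : Finite (G ⧸ G') := G'.finite_quotient_of_finiteIndex
  -- the quotient has cardinality `l`
  have hcard : Nat.card (G ⧸ G') = l := hidx
  -- `g ^ l ∈ G'`
  have hgl : g ^ l ∈ G' := hidx ▸ G'.pow_index_mem g
  -- conjugation by elements of `G'` is trivial on `G'`
  have hconjG' : ∀ u ∈ G', ∀ x : G', MulAut.conjNormal (H := G') u x = x := by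
    intro u hu x
    ext
    rw [MulAut.conjNormal_apply]
    have h := mul_comm (⟨u, hu⟩ : G') x
    have h' : u * (x : G) = (x : G) * u := congrArg Subtype.val h
    rw [h', mul_inv_cancel_right]
  -- the automorphism τ := conjugation by `g⁻¹`
  set τ : MulAut G' := (MulAut.conjNormal (H := G') g)⁻¹ with hτ
  have hτapp : ∀ x : G', (τ x : G) = g⁻¹ * x * g := by
    intro x
    rw [hτ]
    exact MulAut.conjNormal_symm_apply g x
  -- `τ ^ l = 1`
  have hτl : ∀ x : G', (τ ^ l) x = x := by
    intro x
    have h1 : τ ^ l = MulAut.conjNormal (H := G') ((g⁻¹) ^ l) := by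
      rw [hτ, ← map_inv, ← map_pow]
    have h2 : (g⁻¹) ^ l ∈ G' := by
      rw [inv_pow]; exact G'.inv_mem hgl
    rw [h1]
    exact hconjG' _ h2 x
  -- the norm map
  set ν : G' → G' := fun x => ∏ i ∈ Finset.range l, (τ ^ i) x with hν
  have hνmul : ∀ x y : G', ν (x * y) = ν x * ν y := by
    intro x y
    simp only [hν, map_mul]
    exact Finset.prod_mul_distrib
  have hνinv : ∀ x : G', ν x⁻¹ = (ν x)⁻¹ := by
    intro x
    simp only [hν, map_inv]
    exact Finset.prod_inv_distrib (fun i => (τ ^ i) x)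
  -- ν is invariant under τ
  have hντ : ∀ x : G', ν (τ x) = ν x := by
    intro x
    have key : ∀ i, (τ ^ i) (τ x) = (fun i => (τ ^ i) x) (i + 1) := by
      intro i
      simp only
      rw [pow_succ]
      rfl
    calc ν (τ x) = ∏ i ∈ Finset.range l, (fun i => (τ ^ i) x) (i + 1) := by
          simp only [hν]; exact Finset.prod_congr rfl fun i _ => key i
      _ = ν x := by
          have h1 := Finset.prod_range_succ' (fun i => (τ ^ i) x) l
          have h2 := Finset.prod_range_succ (fun i => (τ ^ i) x) l
          have h3 : (τ ^ l) x = (τ ^ 0) x := by rw [pow_zero]; exact hτl x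
          have := h1.symm.trans h2
          rw [h3] at this
          simp only [hν]
          exact mul_right_cancel this
  have hντ' : ∀ x : G', ν (τ⁻¹ x) = ν x := by
    intro x
    have := hντ (τ⁻¹ x)
    rw [show τ (τ⁻¹ x) = x by simp] at this
    exact this.symm
  -- ν is invariant under all integer powers of τ
  have hνz : ∀ (k : ℤ) (x : G'), ν ((τ ^ k) x) = ν x := by
    intro k
    induction k using Int.induction_on with
    | zero => intro x; rw [zpow_zero]; rfl
    | succ n ih =>
        intro x
        have h1 : (τ ^ ((n : ℤ) + 1)) x = (τ ^ (n : ℤ)) (τ x) := by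
          rw [zpow_add_one]; rfl
        rw [h1, ih, hντ]
    | pred n ih =>
        intro x
        have h1 : (τ ^ (-(n : ℤ) - 1)) x = (τ ^ (-(n : ℤ))) (τ⁻¹ x) := by
          rw [sub_eq_add_neg, zpow_add, zpow_neg_one]; rfl
        rw [h1, ih, hντ']
  -- every element of `G` is `g ^ i * u` with `u ∈ G'`
  have hdec : ∀ a : G, ∃ i : ℤ, (g ^ i)⁻¹ * a ∈ G' := by
    intro a
    have h1 : ((g : G ⧸ G') : G ⧸ G') ≠ 1 := by
      simpa [QuotientGroup.eq_one_iff] using hg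
    have hord : orderOf ((g : G) : G ⧸ G') = l :=
      orderOf_eq_prime (by rw [← hcard]; exact pow_card_eq_one') h1
    have htop : Subgroup.zpowers ((g : G) : G ⧸ G') = ⊤ := by
      apply Subgroup.eq_top_of_card_eq
      rw [Nat.card_zpowers, hord, hcard]
    have ha : ((a : G) : G ⧸ G') ∈ Subgroup.zpowers ((g : G) : G ⧸ G') := by
      rw [htop]; trivial
    obtain ⟨i, hi⟩ := ha
    refine ⟨i, ?_⟩
    rw [← QuotientGroup.eq]
    rw [← hi]
    exact (QuotientGroup.mk' G').map_zpow g i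
  -- ν is invariant under conjugation by any element of `G`
  have hconjinv : ∀ (h : G) (x : G'), ν (MulAut.conjNormal (H := G') h x) = ν x := by
    intro h x
    obtain ⟨i, hi⟩ := hdec h
    have hh : h = g ^ i * ((g ^ i)⁻¹ * h) := by group
    have h1 : MulAut.conjNormal (H := G') h x
        = MulAut.conjNormal (H := G') (g ^ i)
          (MulAut.conjNormal (H := G') ((g ^ i)⁻¹ * h) x) := by
      conv_lhs => rw [hh]
      rw [map_mul]
      rfl
    rw [h1, hconjG' _ hi]
    have h2 : MulAut.conjNormal (H := G') (g ^ i) = τ ^ (-i) := by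
      rw [map_zpow, hτ, inv_zpow, zpow_neg, inv_inv]
    rw [h2]
    exact hνz (-i) x
  -- the subgroup of elements of `G'` killed by ν
  set K : Subgroup G :=
    { carrier := {x | ∃ h : x ∈ G', ν ⟨x, h⟩ = 1}
      one_mem' := ⟨G'.one_mem, by
        have : (⟨1, G'.one_mem⟩ : G') = 1 := rfl
        rw [this]
        simp only [hν, map_one]
        exact Finset.prod_const_one⟩
      mul_mem' := by
        rintro x y ⟨hx, hx1⟩ ⟨hy, hy1⟩
        refine ⟨G'.mul_mem hx hy, ?_⟩
        have : (⟨x * y, G'.mul_mem hx hy⟩ : G') = ⟨x, hx⟩ * ⟨y, hy⟩ := rfl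
        rw [this, hνmul, hx1, hy1, one_mul]
      inv_mem' := by
        rintro x ⟨hx, hx1⟩
        refine ⟨G'.inv_mem hx, ?_⟩
        have : (⟨x⁻¹, G'.inv_mem hx⟩ : G') = (⟨x, hx⟩ : G')⁻¹ := rfl
        rw [this, hνinv, hx1, inv_one] } with hK
  have hKmem : ∀ x (hx : x ∈ G'), ν ⟨x, hx⟩ = 1 → x ∈ K := fun x hx h => ⟨hx, h⟩
  -- K is stable under conjugation
  have hKconj : ∀ (a : G), ∀ x ∈ K, a * x * a⁻¹ ∈ K := by
    rintro a x ⟨hx, hx1⟩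
    have hmem : a * x * a⁻¹ ∈ G' := Subgroup.Normal.conj_mem ‹G'.Normal› x hx a
    refine ⟨hmem, ?_⟩
    have : (⟨a * x * a⁻¹, hmem⟩ : G') = MulAut.conjNormal (H := G') a ⟨x, hx⟩ := by
      ext; rw [MulAut.conjNormal_apply]
    rw [this, hconjinv, hx1]
  -- commutators with one entry in `G'` lie in `K`
  have hstepA : ∀ u ∈ G', ∀ b : G, ⁅u, b⁆ ∈ K := by
    intro u hu b
    have h1 : ⁅u, b⁆ = u * (b * u⁻¹ * b⁻¹) := by group
    have h2 : b * u⁻¹ * b⁻¹ ∈ G' := Subgroup.Normal.conj_mem ‹G'.Normal› _ (G'.inv_mem hu) b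
    have hmem : ⁅u, b⁆ ∈ G' := h1 ▸ G'.mul_mem hu h2
    refine ⟨hmem, ?_⟩
    have h3 : (⟨⁅u, b⁆, hmem⟩ : G') = ⟨u, hu⟩ * MulAut.conjNormal (H := G') b (⟨u, hu⟩)⁻¹ := by
      ext
      show ⁅u, b⁆ = u * (b * u⁻¹ * b⁻¹)
      exact h1
    rw [h3, hνmul, hconjinv, hνinv, mul_inv_cancel]
  have hstepB : ∀ (a : G), ∀ v ∈ G', ⁅a, v⁆ ∈ K := by
    intro a v hv
    have h1 : ⁅a, v⁆ = (a * v * a⁻¹) * v⁻¹ := by group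
    have h2 : a * v * a⁻¹ ∈ G' := Subgroup.Normal.conj_mem ‹G'.Normal› _ hv a
    have hmem : ⁅a, v⁆ ∈ G' := h1 ▸ G'.mul_mem h2 (G'.inv_mem hv)
    refine ⟨hmem, ?_⟩
    have h3 : (⟨⁅a, v⁆, hmem⟩ : G') = MulAut.conjNormal (H := G') a ⟨v, hv⟩ * (⟨v, hv⟩ : G')⁻¹ := by
      ext
      show ⁅a, v⁆ = (a * v * a⁻¹) * v⁻¹
      exact h1
    rw [h3, hνmul, hconjinv, hνinv, mul_inv_cancel]
  -- all commutators lie in `K`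
  have hcommK : commutator G ≤ K := by
    rw [commutator, Subgroup.commutator_le]
    intro a _ b _
    obtain ⟨i, hi⟩ := hdec a
    obtain ⟨j, hj⟩ := hdec b
    set u := (g ^ i)⁻¹ * a with hu
    set v := (g ^ j)⁻¹ * b with hv
    have ha : a = g ^ i * u := by rw [hu]; group
    have hb : b = g ^ j * v := by rw [hv]; group
    have key1 : ⁅a, b⁆ = (g ^ i * ⁅u, b⁆ * (g ^ i)⁻¹) * ⁅g ^ i, b⁆ := by
      rw [ha]; group
    have key2 : ⁅g ^ i, b⁆ = ⁅g ^ i, g ^ j⁆ * (g ^ j * ⁅g ^ i, v⁆ * (g ^ j)⁻¹) := by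
      rw [hb]; group
    have hij : ⁅g ^ i, g ^ j⁆ = 1 :=
      commutatorElement_eq_one_iff_commute.mpr ((Commute.refl g).zpow_zpow i j)
    rw [key1, key2, hij, one_mul]
    exact K.mul_mem (hKconj _ _ (hstepA u hi b)) (hKconj _ _ (hstepB (g ^ i) v hj))
  -- `c ∈ G'` and `ν c = 1`
  have hcomm_le : commutator G ≤ G' := by
    letI : CommGroup (G ⧸ G') := by
      haveI : IsCyclic (G ⧸ G') := isCyclic_of_prime_card hcard
      exact IsCyclic.commGroup
    have := Abelianization.commutator_subset_ker (QuotientGroup.mk' G')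
    rwa [QuotientGroup.ker_mk'] at this
  have hc' : c ∈ G' := hcomm_le hc
  have hνc : ν ⟨c, hc'⟩ = 1 := by
    obtain ⟨h, h1⟩ := hcommK hc
    exact h1
  -- the power formula
  have hpow : ∀ n : ℕ, (g * c) ^ n = g ^ n * ↑(∏ i ∈ Finset.range n, (τ ^ i) ⟨c, hc'⟩) := by
    intro n
    induction n with
    | zero => simp
    | succ n ih =>
        have hprod : (∏ i ∈ Finset.range (n + 1), (τ ^ i) (⟨c, hc'⟩ : G'))
            = (τ ^ n) ⟨c, hc'⟩ * ∏ i ∈ Finset.range n, (τ ^ i) ⟨c, hc'⟩ := by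
          rw [Finset.prod_range_succ, mul_comm]
        have hτn : ((τ ^ n) (⟨c, hc'⟩ : G') : G) = (g ^ n)⁻¹ * c * g ^ n := by
          have h1 : τ ^ n = MulAut.conjNormal (H := G') ((g ^ n)⁻¹) := by
            rw [hτ, ← map_inv, ← map_pow, inv_pow]
          rw [h1, MulAut.conjNormal_apply, inv_inv]
        calc (g * c) ^ (n + 1) = (g * c) * (g * c) ^ n := pow_succ' (g * c) n
      _ = g * c * (g ^ n * ↑(∏ i ∈ Finset.range n, (τ ^ i) ⟨c, hc'⟩)) := by rw [ih]
      _ = g ^ (n + 1) * (((g ^ n)⁻¹ * c * g ^ n) * ↑(∏ i ∈ Finset.range n, (τ ^ i) ⟨c, hc'⟩)) := by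
          rw [pow_succ]
          group
      _ = g ^ (n + 1) * ↑(∏ i ∈ Finset.range (n + 1), (τ ^ i) ⟨c, hc'⟩) := by
          rw [hprod, Subgroup.coe_mul, hτn]
  have hfinal := hpow l
  have : (∏ i ∈ Finset.range l, (τ ^ i) (⟨c, hc'⟩ : G')) = 1 := hνc
  rw [hfinal, this]
  simp
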